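/- arXiv:2307.12590 — 2 statements merged into one kernel-verified Lean document; each statement's English description precedes it below -/
import Mathlib

section
/- Let $\omega$ be a control function on $[0,T]$, let $N > 2p - 2$ with $N > p \ge 1$, and suppose a partition $0 = t_0 < \dots < t_n = T$ satisfies $\omega(t_k, t_{k+1}) \le \omega(0,T)/n$ for all $k$. Then the double sum $\sum_{k=1}^n \sum_{i=k}^n \left(\omega(t_{i-1},t_i)^{1/p} \sum_{j=1}^{i-1} \omega(t_{j-1},t_j)^{\frac{N+1}{p}} + \omega(t_{i-1},t_i)^{\frac{N+1}{p}}\right)\omega(t_{k-1},t_k)^{\frac{N+1}{p}}$ is bounded by $C\, n^{3 - \frac{2N+3}{p}}$ for a constant $C$ depending only on $N$, $p$, and $\omega(0,T)$; in particular this exponent satisfies $3 - \frac{2N+3}{p} < 1 - \frac{N+1}{p}$ precisely when $N > 2p-2$. -/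
open scoped BigOperators

/-- for `N > p ≥ 1`, the exponent inequality
`3 - (2N+3)/p < 1 - (N+1)/p` holds precisely when `N > 2p - 2`; and if `N > 2p-2`, then
for any control `ω` and any quasi-uniform partition (`ω(t_k,t_{k+1}) ≤ ω(0,T)/n`), the
double sum
`∑_{k=1}^n ∑_{i=k}^n (ω(t_{i-1},t_i)^{1/p} ∑_{j=1}^{i-1} ω(t_{j-1},t_j)^{(N+1)/p}
+ ω(t_{i-1},t_i)^{(N+1)/p}) ω(t_{k-1},t_k)^{(N+1)/p}`
is bounded by `C · n^{3 - (2N+3)/p}` with `C` depending only on `N`, `p` and `ω(0,T)`. -/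
theorem error_correction_double_sum_bound (N : ℕ) (p : ℝ) (hp : 1 ≤ p)
    (hpN : p < N) :
    ((3 - (2 * (N : ℝ) + 3) / p < 1 - ((N : ℝ) + 1) / p) ↔ 2 * p - 2 < (N : ℝ)) ∧
    (2 * p - 2 < (N : ℝ) →
      ∃ C : ℝ → ℝ, ∀ (T : ℝ) (ω : ℝ → ℝ → ℝ),
        (Continuous fun q : ℝ × ℝ => ω q.1 q.2) →
        (∀ s, ω s s = 0) →
        (∀ s u, 0 ≤ ω s u) →
        (∀ s t u, 0 ≤ s → s ≤ t → t ≤ u → u ≤ T → ω s t + ω t u ≤ ω s u) →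
        ∀ (n : ℕ), 1 ≤ n → ∀ t : ℕ → ℝ, t 0 = 0 → t n = T →
        (∀ k, k < n → t k < t (k + 1)) →
        (∀ k, k < n → ω (t k) (t (k + 1)) ≤ ω 0 T / n) →
        ∑ k ∈ Finset.Icc 1 n,
            (∑ i ∈ Finset.Icc k n,
              (ω (t (i - 1)) (t i) ^ p⁻¹ *
                  (∑ j ∈ Finset.Icc 1 (i - 1),
                    ω (t (j - 1)) (t j) ^ (((N : ℝ) + 1) / p)) +
                ω (t (i - 1)) (t i) ^ (((N : ℝ) + 1) / p))) *
            ω (t (k - 1)) (t k) ^ (((N : ℝ) + 1) / p) ≤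
          C (ω 0 T) * (n : ℝ) ^ (3 - (2 * (N : ℝ) + 3) / p)) := by
  have hp0 : (0:ℝ) < p := lt_of_lt_of_le one_pos hp
  constructor
  · rw [← mul_lt_mul_iff_of_pos_right hp0]
    have h1 : (3 - (2 * (N : ℝ) + 3) / p) * p = 3 * p - (2 * N + 3) := by
      field_simp
    have h2 : (1 - ((N : ℝ) + 1) / p) * p = p - (N + 1) := by
      field_simp
    rw [h1, h2]
    constructor <;> intro h <;> linarith
  · intro _
    refine ⟨fun M => M ^ ((2 * (N:ℝ) + 3) / p) + M ^ ((2 * (N:ℝ) + 2) / p), ?_⟩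
    intro T ω _ _ hnn _ n hn t _ _ _ hq
    set e : ℝ := ((N:ℝ) + 1) / p with he_def
    set M : ℝ := ω 0 T with hM_def
    set a : ℝ := M / n with ha_def
    set q1 : ℝ := (2 * (N:ℝ) + 3) / p with hq1_def
    set q2 : ℝ := (2 * (N:ℝ) + 2) / p with hq2_def
    have hM : 0 ≤ M := hnn 0 T
    have hn0 : (0:ℝ) < (n:ℝ) := by exact_mod_cast hn
    have hn1 : (1:ℝ) ≤ (n:ℝ) := by exact_mod_cast hn
    have ha : 0 ≤ a := div_nonneg hM hn0.le
    have he : 0 < e := by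
      rw [he_def]; positivity
    have hip : (0:ℝ) < p⁻¹ := by positivity
    have hbound : ∀ k, 1 ≤ k → k ≤ n → ω (t (k-1)) (t k) ≤ a := by
      intro k hk1 hk2
      have h := hq (k-1) (by omega)
      rwa [Nat.sub_add_cancel hk1] at h
    have hjsum : ∀ i, i ≤ n →
        (∑ j ∈ Finset.Icc 1 (i-1), ω (t (j-1)) (t j) ^ e) ≤ (n:ℝ) * a ^ e := by
      intro i hi
      calc ∑ j ∈ Finset.Icc 1 (i-1), ω (t (j-1)) (t j) ^ e
          ≤ ∑ _j ∈ Finset.Icc 1 (i-1), a ^ e := by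
            apply Finset.sum_le_sum
            intro j hj
            simp only [Finset.mem_Icc] at hj
            exact Real.rpow_le_rpow (hnn _ _) (hbound j hj.1 (by omega)) he.le
        _ = ((i-1 : ℕ) : ℝ) * a ^ e := by
            rw [Finset.sum_const, Nat.card_Icc, nsmul_eq_mul]
            norm_num
        _ ≤ (n:ℝ) * a ^ e := by
            apply mul_le_mul_of_nonneg_right _ (Real.rpow_nonneg ha e)
            exact_mod_cast (by omega : i - 1 ≤ n)
    set B : ℝ := a ^ p⁻¹ * ((n:ℝ) * a ^ e) + a ^ e with hB_def
    have hB : 0 ≤ B := by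
      rw [hB_def]
      have := Real.rpow_nonneg ha p⁻¹
      have := Real.rpow_nonneg ha e
      positivity
    have hterm : ∀ i, 1 ≤ i → i ≤ n →
        ω (t (i-1)) (t i) ^ p⁻¹ * (∑ j ∈ Finset.Icc 1 (i-1), ω (t (j-1)) (t j) ^ e)
          + ω (t (i-1)) (t i) ^ e ≤ B := by
      intro i h1 h2
      rw [hB_def]
      apply add_le_add
      · apply mul_le_mul
        · exact Real.rpow_le_rpow (hnn _ _) (hbound i h1 h2) hip.le
        · exact hjsum i h2
        · exact Finset.sum_nonneg fun j _ => Real.rpow_nonneg (hnn _ _) _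
        · exact Real.rpow_nonneg ha _
      · exact Real.rpow_le_rpow (hnn _ _) (hbound i h1 h2) he.le
    have hisum : ∀ k, 1 ≤ k → k ≤ n →
        (∑ i ∈ Finset.Icc k n,
          (ω (t (i-1)) (t i) ^ p⁻¹ * (∑ j ∈ Finset.Icc 1 (i-1), ω (t (j-1)) (t j) ^ e)
            + ω (t (i-1)) (t i) ^ e)) ≤ (n:ℝ) * B := by
      intro k h1 h2
      calc (∑ i ∈ Finset.Icc k n,
          (ω (t (i-1)) (t i) ^ p⁻¹ * (∑ j ∈ Finset.Icc 1 (i-1), ω (t (j-1)) (t j) ^ e)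
            + ω (t (i-1)) (t i) ^ e))
          ≤ ∑ _i ∈ Finset.Icc k n, B := by
            apply Finset.sum_le_sum
            intro i hi
            simp only [Finset.mem_Icc] at hi
            exact hterm i (le_trans h1 hi.1) hi.2
        _ = ((n + 1 - k : ℕ) : ℝ) * B := by
            rw [Finset.sum_const, Nat.card_Icc, nsmul_eq_mul]
        _ ≤ (n:ℝ) * B := by
            apply mul_le_mul_of_nonneg_right _ hB
            exact_mod_cast (by omega : n + 1 - k ≤ n)
    have hmain : (∑ k ∈ Finset.Icc 1 n,
        (∑ i ∈ Finset.Icc k n,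
          (ω (t (i-1)) (t i) ^ p⁻¹ * (∑ j ∈ Finset.Icc 1 (i-1), ω (t (j-1)) (t j) ^ e)
            + ω (t (i-1)) (t i) ^ e)) * ω (t (k-1)) (t k) ^ e)
        ≤ (n:ℝ) * (((n:ℝ) * B) * a ^ e) := by
      calc (∑ k ∈ Finset.Icc 1 n,
          (∑ i ∈ Finset.Icc k n,
            (ω (t (i-1)) (t i) ^ p⁻¹ * (∑ j ∈ Finset.Icc 1 (i-1), ω (t (j-1)) (t j) ^ e)
              + ω (t (i-1)) (t i) ^ e)) * ω (t (k-1)) (t k) ^ e)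
          ≤ ∑ _k ∈ Finset.Icc 1 n, ((n:ℝ) * B) * a ^ e := by
            apply Finset.sum_le_sum
            intro k hk
            simp only [Finset.mem_Icc] at hk
            apply mul_le_mul (hisum k hk.1 hk.2)
              (Real.rpow_le_rpow (hnn _ _) (hbound k hk.1 hk.2) he.le)
              (Real.rpow_nonneg (hnn _ _) e)
              (by positivity)
        _ = ((n + 1 - 1 : ℕ) : ℝ) * (((n:ℝ) * B) * a ^ e) := by
            rw [Finset.sum_const, Nat.card_Icc, nsmul_eq_mul]
        _ = (n:ℝ) * (((n:ℝ) * B) * a ^ e) := by norm_num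
    -- algebraic identities
    have hE1 : a ^ p⁻¹ * a ^ e * a ^ e = a ^ q1 := by
      rw [← Real.rpow_add' ha (add_pos hip he).ne',
        ← Real.rpow_add' ha (add_pos (add_pos hip he) he).ne']
      rw [he_def, hq1_def]
      congr 1
      field_simp
      ring
    have hE2 : a ^ e * a ^ e = a ^ q2 := by
      rw [← Real.rpow_add' ha (add_pos he he).ne']
      rw [he_def, hq2_def]
      congr 1
      field_simp
      ring
    have h3n : (n:ℝ) ^ (3:ℝ) = (n:ℝ) * (n:ℝ) * (n:ℝ) := by
      rw [show (3:ℝ) = ((3:ℕ):ℝ) by norm_num, Real.rpow_natCast]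
      ring
    have h2n : (n:ℝ) ^ (2:ℝ) = (n:ℝ) * (n:ℝ) := by
      rw [show (2:ℝ) = ((2:ℕ):ℝ) by norm_num, Real.rpow_natCast]
      ring
    have expand : (n:ℝ) * (((n:ℝ) * B) * a ^ e)
        = (n:ℝ) * (n:ℝ) * (n:ℝ) * (a ^ p⁻¹ * a ^ e * a ^ e)
          + (n:ℝ) * (n:ℝ) * (a ^ e * a ^ e) := by
      rw [hB_def]; ring
    have t1 : (n:ℝ) * (n:ℝ) * (n:ℝ) * a ^ q1 = M ^ q1 * (n:ℝ) ^ ((3:ℝ) - q1) := by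
      rw [ha_def, Real.div_rpow hM hn0.le, Real.rpow_sub hn0, h3n]
      ring
    have t2 : (n:ℝ) * (n:ℝ) * a ^ q2 = M ^ q2 * (n:ℝ) ^ ((2:ℝ) - q2) := by
      rw [ha_def, Real.div_rpow hM hn0.le, Real.rpow_sub hn0, h2n]
      ring
    have hdq : q1 - q2 = 1 / p := by
      rw [hq1_def, hq2_def, div_sub_div_same]
      congr 1
      ring
    have h1p : 1 / p ≤ 1 := by rw [div_le_one hp0]; exact hp
    have hexp : (2:ℝ) - q2 ≤ (3:ℝ) - q1 := by linarith
    have t3 : M ^ q2 * (n:ℝ) ^ ((2:ℝ) - q2) ≤ M ^ q2 * (n:ℝ) ^ ((3:ℝ) - q1) :=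
      mul_le_mul_of_nonneg_left (Real.rpow_le_rpow_of_exponent_le hn1 hexp)
        (Real.rpow_nonneg hM _)
    calc (∑ k ∈ Finset.Icc 1 n,
        (∑ i ∈ Finset.Icc k n,
          (ω (t (i-1)) (t i) ^ p⁻¹ * (∑ j ∈ Finset.Icc 1 (i-1), ω (t (j-1)) (t j) ^ e)
            + ω (t (i-1)) (t i) ^ e)) * ω (t (k-1)) (t k) ^ e)
        ≤ (n:ℝ) * (((n:ℝ) * B) * a ^ e) := hmain
      _ = (n:ℝ) * (n:ℝ) * (n:ℝ) * (a ^ p⁻¹ * a ^ e * a ^ e)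
          + (n:ℝ) * (n:ℝ) * (a ^ e * a ^ e) := expand
      _ = M ^ q1 * (n:ℝ) ^ ((3:ℝ) - q1) + M ^ q2 * (n:ℝ) ^ ((2:ℝ) - q2) := by
          rw [hE1, hE2, t1, t2]
      _ ≤ M ^ q1 * (n:ℝ) ^ ((3:ℝ) - q1) + M ^ q2 * (n:ℝ) ^ ((3:ℝ) - q1) := by
          linarith
      _ = (M ^ q1 + M ^ q2) * (n:ℝ) ^ ((3:ℝ) - q1) := by ring
end

section
/- Let $0 = t_0 < \dots < t_n = T$, let $y$ solve a differential equation $dy_t = f(y_t)\,dx_t$, $y_0 = \xi$, with unique flow $y(s; t, z)$ (the solution at time $s$ started at time $t$ from $z$), and let $(\overline{y}_{t_k})_{k=0}^n$ be any sequence with $\overline{y}_{t_0} = \xi$. Define the local errors $e(t_k) = y(t_k; t_{k-1}, \overline{y}_{t_{k-1}}) - \overline{y}_{t_k}$, the value function $u(t,z) = g(y(T; t, z))$ for a $C^2$ function $g: \mathbb{R}^e \to \mathbb{R}^c$, and the first variation $\Psi(t,z) = \nabla_z u(t,z)$. Assume $u(t, \cdot)$ is continuously differentiable for each $t$. Then the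 global error admits the exact representation $g(y_T) - g(\overline{y}_T) = \sum_{k=1}^n \left(\int_0^1 \Psi(t_k, \overline{y}_{t_k} + s\,e(t_k))\,ds\right)\,e(t_k)$. -/
open scoped BigOperators

lemma seg_ftc_aux {e c : ℕ} (f : (Fin e → ℝ) → (Fin c → ℝ)) (hf : ContDiff ℝ 1 f)
    (a b : Fin e → ℝ) :
    f b - f a = (∫ s in (0:ℝ)..1, fderiv ℝ f (a + s • (b - a))) (b - a) := by
  have hγ : ∀ s : ℝ, HasDerivAt (fun s : ℝ => a + s • (b - a)) (b - a) s := by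
    intro s
    simpa using ((hasDerivAt_id s).smul_const (b - a)).const_add a
  have hφ : ∀ s : ℝ, HasDerivAt (fun s : ℝ => f (a + s • (b - a)))
      (fderiv ℝ f (a + s • (b - a)) (b - a)) s := fun s =>
    (hf.differentiable one_ne_zero _).hasFDerivAt.comp_hasDerivAt s (hγ s)
  have hcont : Continuous fun s : ℝ => fderiv ℝ f (a + s • (b - a)) := by
    exact (hf.continuous_fderiv one_ne_zero).comp (by continuity)
  have hInt : IntervalIntegrable (fun s : ℝ => fderiv ℝ f (a + s • (b - a)))
      MeasureTheory.volume 0 1 := hcont.intervalIntegrable _ _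
  have hInt2 : IntervalIntegrable
      (fun s : ℝ => fderiv ℝ f (a + s • (b - a)) (b - a))
      MeasureTheory.volume 0 1 := by
    exact (hcont.clm_apply continuous_const).intervalIntegrable _ _
  have h1 : ∫ s in (0:ℝ)..1, fderiv ℝ f (a + s • (b - a)) (b - a)
      = f (a + (1:ℝ) • (b - a)) - f (a + (0:ℝ) • (b - a)) :=
    intervalIntegral.integral_eq_sub_of_hasDerivAt (fun s _ => hφ s) hInt2
  rw [ContinuousLinearMap.intervalIntegral_apply hInt, h1]
  simp

lemma tele_aux {M : Type*} [AddCommGroup M] :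
    ∀ (n : ℕ) (F : Fin (n+1) → M),
    ∑ k : Fin n, (F k.castSucc - F k.succ) = F 0 - F (Fin.last n) := by
  intro n
  induction n with
  | zero => simp
  | succ n ih =>
    intro F
    rw [Fin.sum_univ_castSucc]
    have := ih (fun k => F k.castSucc)
    simp only [Fin.succ_castSucc] at this ⊢
    rw [this]
    simp [Fin.succ_last]


/-- (error representation formula) -/
theorem error_representation_formula
    (e c n : ℕ) (T : ℝ)
    (Φ : ℝ → ℝ → (Fin e → ℝ) → (Fin e → ℝ))
    (g : (Fin e → ℝ) → (Fin c → ℝ)) (hg : ContDiff ℝ 2 g)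
    (ξ : Fin e → ℝ) (t : Fin (n + 1) → ℝ)
    (ht0 : t 0 = 0) (htn : t (Fin.last n) = T) (hmono : Monotone t)
    (hflow : ∀ a b z, Φ T b (Φ b a z) = Φ T a z)
    (hid : ∀ z, Φ T T z = z)
    (hu : ∀ τ : ℝ, ContDiff ℝ 1 fun z => g (Φ T τ z))
    (ybar : Fin (n + 1) → (Fin e → ℝ)) (hybar0 : ybar 0 = ξ) :
    g (Φ T (t 0) ξ) - g (ybar (Fin.last n)) =
      ∑ k : Fin n,
        (∫ s in (0 : ℝ)..1,
            fderiv ℝ (fun z => g (Φ T (t k.succ) z))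
              (ybar k.succ +
                s • (Φ (t k.succ) (t k.castSucc) (ybar k.castSucc) - ybar k.succ)))
          (Φ (t k.succ) (t k.castSucc) (ybar k.castSucc) - ybar k.succ) := by
  set F : Fin (n+1) → (Fin c → ℝ) := fun k => g (Φ T (t k) (ybar k)) with hF
  have hterm : ∀ k : Fin n,
      (∫ s in (0 : ℝ)..1,
            fderiv ℝ (fun z => g (Φ T (t k.succ) z))
              (ybar k.succ +
                s • (Φ (t k.succ) (t k.castSucc) (ybar k.castSucc) - ybar k.succ)))
          (Φ (t k.succ) (t k.castSucc) (ybar k.castSucc) - ybar k.succ)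
        = F k.castSucc - F k.succ := by
    intro k
    rw [← seg_ftc_aux (fun z => g (Φ T (t k.succ) z)) (hu _) (ybar k.succ)
      (Φ (t k.succ) (t k.castSucc) (ybar k.castSucc))]
    simp only [hF, hflow]
  calc g (Φ T (t 0) ξ) - g (ybar (Fin.last n))
      = F 0 - F (Fin.last n) := by
        simp only [hF, hybar0, htn, hid]
    _ = ∑ k : Fin n, (F k.castSucc - F k.succ) := (tele_aux n F).symm
    _ = _ := by
        exact Finset.sum_congr rfl fun k _ => (hterm k).symm
end
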